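/- Let g, h : R^n → R be C¹ with ∇g L-Lipschitz and ∇h M-Lipschitz, f = g + h, 0 < γ ≤ min(1/L, 1/M) with γM < 1, f bounded below by f(x*). Suppose iterates satisfy, for all k ≥ 1, both (i) f(x^k) ≤ f(x^{k-1}) - ((1-γM)/(2γ))‖x^k - x^{k-1}‖² + (λα²/2) ε_{k-1}² with λ = 1/γ + L, and (ii) ‖∇f(x^k)‖² ≤ 2(M + 1/γ)² ‖x^k - x^{k-1}‖² + 2α²(L + 1/γ)² ε_{k-1}². Then for every t ≥ 1, min_{1≤k≤t} ‖∇f(x^k)‖² ≤ (B₁/t)(f(x⁰) - f(x*)) + B₂ ε̄_t², where B₁ = 4(1+γM)²/(γ(1-γM)), B₂ = λα²B₁/2 + 2α²(1+γL)²/γ², and ε̄_t² = (1/t)Σ_{k=1}^t ε_{k-1}². -/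

import Mathlib

open Finset

/-- Main convergence theorem for PR-SANS with inexact (domain-adapted) priors: the running
minimum of squared gradient norms is bounded by `(B₁/t)(f(x⁰) - f(x*)) + B₂ ε̄_t²`. -/
theorem stmt_19 {n : ℕ} (g h : EuclideanSpace ℝ (Fin n) → ℝ)
    (hgdiff : Differentiable ℝ g) (hhdiff : Differentiable ℝ h)
    (L M γ α : ℝ) (hL : 0 < L) (hM : 0 < M) (hγ : 0 < γ)
    (hγle : γ ≤ min (1 / L) (1 / M)) (hγM : γ * M < 1) (hα : 0 < α)
    (hglip : ∀ a b, ‖gradient g a - gradient g b‖ ≤ L * ‖a - b‖)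
    (hhlip : ∀ a b, ‖gradient h a - gradient h b‖ ≤ M * ‖a - b‖)
    (f : EuclideanSpace ℝ (Fin n) → ℝ) (hf : ∀ x, f x = g x + h x)
    (xstar : EuclideanSpace ℝ (Fin n)) (hbelow : ∀ x, f xstar ≤ f x)
    (x : ℕ → EuclideanSpace ℝ (Fin n)) (ε : ℕ → ℝ) (hε : ∀ k, 0 ≤ ε k)
    (hdec : ∀ k : ℕ, 1 ≤ k →
      f (x k) ≤ f (x (k - 1)) - ((1 - γ * M) / (2 * γ)) * ‖x k - x (k - 1)‖ ^ 2
        + ((1 / γ + L) * α ^ 2 / 2) * ε (k - 1) ^ 2)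
    (hgrad : ∀ k : ℕ, 1 ≤ k →
      ‖gradient f (x k)‖ ^ 2 ≤ 2 * (M + 1 / γ) ^ 2 * ‖x k - x (k - 1)‖ ^ 2
        + 2 * α ^ 2 * (L + 1 / γ) ^ 2 * ε (k - 1) ^ 2) :
    ∀ t : ℕ, ∀ ht : 1 ≤ t,
      (Icc 1 t).inf' (Finset.nonempty_Icc.mpr ht) (fun k => ‖gradient f (x k)‖ ^ 2) ≤
        (4 * (1 + γ * M) ^ 2 / (γ * (1 - γ * M)) / t) * (f (x 0) - f xstar)
        + ((1 / γ + L) * α ^ 2 * (4 * (1 + γ * M) ^ 2 / (γ * (1 - γ * M))) / 2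
            + 2 * α ^ 2 * (1 + γ * L) ^ 2 / γ ^ 2)
          * ((1 / (t : ℝ)) * ∑ k ∈ Icc 1 t, ε (k - 1) ^ 2) := by
  intro t ht
  have hγ0 : γ ≠ 0 := ne_of_gt hγ
  have h1M : 0 < 1 - γ * M := by linarith
  have h1M0 : (1 - γ * M) ≠ 0 := ne_of_gt h1M
  set D : ℝ := (1 - γ * M) / (2 * γ) with hD
  set B1 : ℝ := 4 * (1 + γ * M) ^ 2 / (γ * (1 - γ * M)) with hB1
  have hB1pos : 0 ≤ B1 := by
    rw [hB1]; positivity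
  have hkey : 2 * (M + 1 / γ) ^ 2 = B1 * D := by
    rw [hB1, hD, div_mul_div_comm, eq_div_iff (mul_ne_zero (mul_ne_zero hγ0 h1M0) (by positivity))]; field_simp; ring
  have hkey2 : 2 * α ^ 2 * (L + 1 / γ) ^ 2 = 2 * α ^ 2 * (1 + γ * L) ^ 2 / γ ^ 2 := by
    field_simp; ring
  set c : ℝ := (1 / γ + L) * α ^ 2 / 2 with hc
  -- telescoping sum bound
  have hsum : ∀ m : ℕ, D * ∑ k ∈ Icc 1 m, ‖x k - x (k - 1)‖ ^ 2
      ≤ f (x 0) - f (x m) + c * ∑ k ∈ Icc 1 m, ε (k - 1) ^ 2 := by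
    intro m
    induction m with
    | zero => simp
    | succ m ih =>
      rw [Finset.sum_Icc_succ_top (by omega : 1 ≤ m + 1),
          Finset.sum_Icc_succ_top (by omega : 1 ≤ m + 1)]
      simp only [Nat.add_sub_cancel]
      have hd := hdec (m + 1) (by omega)
      simp only [Nat.add_sub_cancel] at hd
      have expand : D * (∑ k ∈ Icc 1 m, ‖x k - x (k - 1)‖ ^ 2 + ‖x (m + 1) - x m‖ ^ 2)
          = D * ∑ k ∈ Icc 1 m, ‖x k - x (k - 1)‖ ^ 2 + D * ‖x (m + 1) - x m‖ ^ 2 := by ring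
      rw [expand]
      linarith [ih, hd]
  -- summed gradient bound
  have hG : ∑ k ∈ Icc 1 t, ‖gradient f (x k)‖ ^ 2
      ≤ 2 * (M + 1 / γ) ^ 2 * ∑ k ∈ Icc 1 t, ‖x k - x (k - 1)‖ ^ 2
        + 2 * α ^ 2 * (L + 1 / γ) ^ 2 * ∑ k ∈ Icc 1 t, ε (k - 1) ^ 2 := by
    rw [Finset.mul_sum, Finset.mul_sum, ← Finset.sum_add_distrib]
    exact Finset.sum_le_sum fun k hk => hgrad k (Finset.mem_Icc.mp hk).1
  rw [hkey, hkey2] at hG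
  -- min bound
  have htpos : (0 : ℝ) < (t : ℝ) := by exact_mod_cast ht
  set m0 : ℝ := (Icc 1 t).inf' (Finset.nonempty_Icc.mpr ht)
    (fun k => ‖gradient f (x k)‖ ^ 2) with hm0
  have hmin : (t : ℝ) * m0 ≤ ∑ k ∈ Icc 1 t, ‖gradient f (x k)‖ ^ 2 := by
    have := Finset.card_nsmul_le_sum (Icc 1 t)
      (fun k => ‖gradient f (x k)‖ ^ 2) m0
      (fun i hi => Finset.inf'_le _ hi)
    simpa [Nat.card_Icc, nsmul_eq_mul] using this
  set S : ℝ := ∑ k ∈ Icc 1 t, ‖x k - x (k - 1)‖ ^ 2 with hS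
  set E : ℝ := ∑ k ∈ Icc 1 t, ε (k - 1) ^ 2 with hE
  have h1 : B1 * (D * S) ≤ B1 * (f (x 0) - f (x t) + c * E) :=
    mul_le_mul_of_nonneg_left (hsum t) hB1pos
  have h2 : 0 ≤ B1 * (f (x t) - f xstar) :=
    mul_nonneg hB1pos (by linarith [hbelow (x t)])
  have goal_eq : B1 / (t : ℝ) * (f (x 0) - f xstar)
      + ((1 / γ + L) * α ^ 2 * B1 / 2 + 2 * α ^ 2 * (1 + γ * L) ^ 2 / γ ^ 2)
        * (1 / (t : ℝ) * E)
      = (B1 * (f (x 0) - f xstar)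
          + (B1 * c + 2 * α ^ 2 * (1 + γ * L) ^ 2 / γ ^ 2) * E) / (t : ℝ) := by
    rw [hc]; field_simp
  rw [goal_eq, le_div_iff₀ htpos]
  nlinarith [hmin, hG, h1, h2]
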